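/- For every integer k ≥ 2, the Andrásfai graph Γ_k contains an induced copy of Γ_{k−1}; concretely, Γ_k minus the three vertices v_0, v_k, v_{2k} is isomorphic to Γ_{k−1}. -/

import Mathlib

open Finset

/-- The Andrásfai graph `Γ_k`: vertices `0, ..., 3k-2`, with `i` adjacent to `j`
iff the cyclic difference of `i` and `j` modulo `3k-1` lies in `{k, ..., 2k-1}`. -/
def andrasfai (k : ℕ) : SimpleGraph (Fin (3 * k - 1)) where
  Adj i j := i ≠ j ∧
    ((i.val + (3 * k - 1) - j.val) % (3 * k - 1) ∈ Finset.Icc k (2 * k - 1) ∨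
     (j.val + (3 * k - 1) - i.val) % (3 * k - 1) ∈ Finset.Icc k (2 * k - 1))
  symm := ⟨fun i j h => ⟨h.1.symm, h.2.symm⟩⟩
  loopless := ⟨fun i h => h.1 rfl⟩

lemma mod_helper (N a b : ℕ) (hb : b < N) :
    (a + N - b) % N = if b ≤ a then (a - b) % N else a + N - b := by
  split_ifs with h
  · have h1 : a + N - b = (a - b) + N := by omega
    rw [h1, Nat.add_mod_right]
  · rw [Nat.mod_eq_of_lt (by omega)]

lemma andrasfai_adj_iff (k : ℕ) (hk : 1 ≤ k) (i j : Fin (3 * k - 1)) :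
    (andrasfai k).Adj i j ↔
      (k ≤ i.val - j.val ∧ i.val - j.val ≤ 2 * k - 1) ∨
      (k ≤ j.val - i.val ∧ j.val - i.val ≤ 2 * k - 1) := by
  have hi := i.isLt
  have hj := j.isLt
  show i ≠ j ∧ _ ↔ _
  rw [mod_helper _ _ _ hj, mod_helper _ _ _ hi, Finset.mem_Icc, Finset.mem_Icc,
    ne_eq, Fin.ext_iff]
  have hij : i.val - j.val < 3 * k - 1 := by omega
  have hji : j.val - i.val < 3 * k - 1 := by omega
  rw [show (i.val - j.val) % (3 * k - 1) = i.val - j.val from Nat.mod_eq_of_lt hij,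
    show (j.val - i.val) % (3 * k - 1) = j.val - i.val from Nat.mod_eq_of_lt hji]
  split_ifs <;> omega

def fwd (k : ℕ) (hk : 2 ≤ k)
    (x : {v : Fin (3 * k - 1) // v.val ≠ 0 ∧ v.val ≠ k ∧ v.val ≠ 2 * k}) :
    Fin (3 * (k - 1) - 1) :=
  ⟨if x.1.val < k then x.1.val - 1 else if x.1.val < 2 * k then x.1.val - 2
    else x.1.val - 3, by
    obtain ⟨⟨v, hv⟩, h0, h1, h2⟩ := x
    dsimp only
    split_ifs <;> omega⟩

def bwd (k : ℕ) (hk : 2 ≤ k) (y : Fin (3 * (k - 1) - 1)) :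
    {v : Fin (3 * k - 1) // v.val ≠ 0 ∧ v.val ≠ k ∧ v.val ≠ 2 * k} :=
  ⟨⟨if y.val < k - 1 then y.val + 1 else if y.val < 2 * k - 2 then y.val + 2
    else y.val + 3, by have := y.isLt; split_ifs <;> omega⟩, by
    have := y.isLt
    dsimp only
    split_ifs <;> exact ⟨by omega, by omega, by omega⟩⟩

lemma fwd_val (k : ℕ) (hk : 2 ≤ k) (x) :
    (fwd k hk x).val = if x.1.val < k then x.1.val - 1
      else if x.1.val < 2 * k then x.1.val - 2 else x.1.val - 3 := rfl

lemma bwd_val (k : ℕ) (hk : 2 ≤ k) (y) :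
    (bwd k hk y).1.val = if y.val < k - 1 then y.val + 1
      else if y.val < 2 * k - 2 then y.val + 2 else y.val + 3 := rfl

def aEquiv (k : ℕ) (hk : 2 ≤ k) :
    {v : Fin (3 * k - 1) // v.val ≠ 0 ∧ v.val ≠ k ∧ v.val ≠ 2 * k} ≃
      Fin (3 * (k - 1) - 1) where
  toFun := fwd k hk
  invFun := bwd k hk
  left_inv x := by
    obtain ⟨h0, h1, h2⟩ := x.2
    have hv := x.1.isLt
    apply Subtype.ext
    apply Fin.ext
    rw [bwd_val, fwd_val]
    split_ifs <;> omega
  right_inv y := by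
    have := y.isLt
    apply Fin.ext
    rw [fwd_val, bwd_val]
    split_ifs <;> omega

/-- For `k ≥ 2`, the Andrásfai graph `Γ_k` minus the three vertices
`v_0, v_k, v_{2k}` is isomorphic to `Γ_{k-1}`. -/
theorem stmt_6 (k : ℕ) (hk : 2 ≤ k) :
    Nonempty
      (((andrasfai k).induce
          {v : Fin (3 * k - 1) | v.val ≠ 0 ∧ v.val ≠ k ∧ v.val ≠ 2 * k}) ≃g
        andrasfai (k - 1)) := by
  refine ⟨⟨aEquiv k hk, ?_⟩⟩
  rintro a b
  rw [SimpleGraph.comap_adj, andrasfai_adj_iff _ (by omega),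
    andrasfai_adj_iff _ (by omega)]
  have ha' := a.2
  have hb' := b.2
  simp only [Set.mem_setOf_eq] at ha' hb'
  obtain ⟨ha0, ha1, ha2⟩ := ha'
  obtain ⟨hb0, hb1, hb2⟩ := hb'
  have ha := a.1.isLt
  have hb := b.1.isLt
  simp only [aEquiv, Equiv.coe_fn_mk, Function.Embedding.coe_subtype]
  rw [fwd_val, fwd_val]
  split_ifs <;> omega
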